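/- Let ε = 1 or ε = -1, let b, c : ℝ × ℝ → ℝ be smooth, let ξ : ℝ → ℝ be smooth with ξ(t) ≠ 0 for all t, and let ρ, σ : ℝ → ℝ be smooth. Then the function u(x,y,t) := (ξ'(t)/ξ(t)) x − (ε/2)(ξ''(t)/ξ(t)) y² + ρ(t) y + σ(t) satisfies ∂x(∂t u + u ∂x u + ∂x² u) + ε ∂y² u + b(y,t) ∂x ∂y u + c(y,t) ∂x² u = 0 for all (x,y,t). -/

import Mathlib

/-- Partial derivative in the first (`x`) variable. -/
noncomputable def pdx (u : ℝ → ℝ → ℝ → ℝ) : ℝ → ℝ → ℝ → ℝ :=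
  fun x y t => deriv (fun s => u s y t) x

/-- Partial derivative in the second (`y`) variable. -/
noncomputable def pdy (u : ℝ → ℝ → ℝ → ℝ) : ℝ → ℝ → ℝ → ℝ :=
  fun x y t => deriv (fun s => u x s t) y

/-- Partial derivative in the third (`t`) variable. -/
noncomputable def pdt (u : ℝ → ℝ → ℝ → ℝ) : ℝ → ℝ → ℝ → ℝ :=
  fun x y t => deriv (fun s => u x y s) t

lemma deriv_linear (a b x : ℝ) : deriv (fun s => a * s + b) x = a := by
  have h : HasDerivAt (fun s => a * s + b) (a * 1) x :=
    ((hasDerivAt_id x).const_mul a).add_const b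
  simpa using h.deriv

theorem stmt5 (ε : ℝ) (hε : ε = 1 ∨ ε = -1)
    (b c : ℝ × ℝ → ℝ)
    (hb : ContDiff ℝ (⊤ : ℕ∞) b) (hc : ContDiff ℝ (⊤ : ℕ∞) c)
    (ξ : ℝ → ℝ) (hξ : ContDiff ℝ (⊤ : ℕ∞) ξ) (hξ0 : ∀ t, ξ t ≠ 0)
    (ρ σ : ℝ → ℝ)
    (hρ : ContDiff ℝ (⊤ : ℕ∞) ρ) (hσ : ContDiff ℝ (⊤ : ℕ∞) σ)
    (u : ℝ → ℝ → ℝ → ℝ)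
    (hudef : ∀ x y t, u x y t =
      deriv ξ t / ξ t * x - ε / 2 * (deriv (deriv ξ) t / ξ t) * y ^ 2 + ρ t * y + σ t) :
    ∀ x y t : ℝ,
      pdx (fun x y t => pdt u x y t + u x y t * pdx u x y t + pdx (pdx u) x y t) x y t
        + ε * pdy (pdy u) x y t + b (y, t) * pdx (pdy u) x y t
        + c (y, t) * pdx (pdx u) x y t = 0 := by
  have hξd : Differentiable ℝ ξ := hξ.differentiable (by simp)
  have hξ' : ContDiff ℝ (⊤ : ℕ∞) (deriv ξ) := (contDiff_infty_iff_deriv.mp hξ).2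
  have hξ'd : Differentiable ℝ (deriv ξ) := hξ'.differentiable (by simp)
  have hξ''d : Differentiable ℝ (deriv (deriv ξ)) :=
    ((contDiff_infty_iff_deriv.mp hξ').2).differentiable (by simp)
  have hρd : Differentiable ℝ ρ := hρ.differentiable (by simp)
  have hσd : Differentiable ℝ σ := hσ.differentiable (by simp)
  set K : ℝ → ℝ := fun t => deriv ξ t / ξ t with hK
  set M : ℝ → ℝ := fun t => -(ε / 2) * (deriv (deriv ξ) t / ξ t) with hM
  have hKd : Differentiable ℝ K := hξ'd.div hξd hξ0
  have hMd : Differentiable ℝ M := (differentiable_const _).mul (hξ''d.div hξd hξ0)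
  have hueq : ∀ x y t, u x y t = K t * x + M t * y ^ 2 + ρ t * y + σ t := by
    intro x y t; rw [hudef]; simp only [hK, hM]; ring
  -- pdx u
  have hpdx : ∀ x y t, pdx u x y t = K t := by
    intro x y t
    have h : (fun s => u s y t) = fun s => K t * s + (M t * y ^ 2 + ρ t * y + σ t) := by
      funext s; rw [hueq]; ring
    rw [pdx, h, deriv_linear]
  -- pdx (pdx u)
  have hpdxx : ∀ x y t, pdx (pdx u) x y t = 0 := by
    intro x y t
    have h : (fun s => pdx u s y t) = fun _ => K t := funext fun s => hpdx s y t
    rw [pdx, h]; simp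
  -- pdy u
  have hpdy : ∀ x y t, pdy u x y t = 2 * M t * y + ρ t := by
    intro x y t
    have h : (fun s => u x s t) = fun s => M t * s ^ 2 + ρ t * s + (K t * x + σ t) := by
      funext s; rw [hueq]; ring
    rw [pdy, h]
    have hd : HasDerivAt (fun s => M t * s ^ 2 + ρ t * s + (K t * x + σ t))
        (2 * M t * y + ρ t) y := by
      have h1 : HasDerivAt (fun s : ℝ => M t * s ^ 2) (M t * (2 * y ^ 1)) y :=
        (hasDerivAt_pow 2 y).const_mul (M t)
      have h2 : HasDerivAt (fun s : ℝ => ρ t * s) (ρ t * 1) y :=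
        (hasDerivAt_id y).const_mul (ρ t)
      have := (h1.add h2).add_const (K t * x + σ t)
      exact this.congr_deriv (by ring)
    exact hd.deriv
  -- pdy (pdy u)
  have hpdyy : ∀ x y t, pdy (pdy u) x y t = 2 * M t := by
    intro x y t
    have h : (fun s => pdy u x s t) = fun s => 2 * M t * s + ρ t :=
      funext fun s => hpdy x s t
    rw [pdy, h, deriv_linear]
  -- pdx (pdy u)
  have hpdxy : ∀ x y t, pdx (pdy u) x y t = 0 := by
    intro x y t
    have h : (fun s => pdy u s y t) = fun _ => 2 * M t * y + ρ t :=
      funext fun s => hpdy s y t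
    rw [pdx, h]; simp
  -- pdt u
  have hpdt : ∀ x y t, pdt u x y t =
      deriv K t * x + deriv M t * y ^ 2 + deriv ρ t * y + deriv σ t := by
    intro x y t
    have h : (fun s => u x y s) = fun s => K s * x + M s * y ^ 2 + ρ s * y + σ s := by
      funext s; rw [hueq]
    rw [pdt, h]
    have hd : HasDerivAt (fun s => K s * x + M s * y ^ 2 + ρ s * y + σ s)
        (deriv K t * x + deriv M t * y ^ 2 + deriv ρ t * y + deriv σ t) t :=
      ((((hKd t).hasDerivAt.mul_const x).add ((hMd t).hasDerivAt.mul_const (y ^ 2))).add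
        ((hρd t).hasDerivAt.mul_const y)).add (hσd t).hasDerivAt
    exact hd.deriv
  intro x y t
  -- compute the outer pdx
  have houter : pdx (fun x y t => pdt u x y t + u x y t * pdx u x y t + pdx (pdx u) x y t) x y t
      = deriv K t + K t * K t := by
    have h : (fun s => pdt u s y t + u s y t * pdx u s y t + pdx (pdx u) s y t)
        = fun s => (deriv K t + K t * K t) * s +
            (deriv M t * y ^ 2 + deriv ρ t * y + deriv σ t +
              (M t * y ^ 2 + ρ t * y + σ t) * K t) := by
      funext s
      rw [hpdt, hueq, hpdx, hpdxx]
      ring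
    rw [pdx, h, deriv_linear]
  rw [houter, hpdyy, hpdxy, hpdxx]
  have hdK : deriv K t = (deriv (deriv ξ) t * ξ t - deriv ξ t * deriv ξ t) / (ξ t) ^ 2 := by
    rw [hK, deriv_fun_div (hξ'd t) (hξd t) (hξ0 t)]
  rw [hdK]
  simp only [hK, hM]
  have h0 := hξ0 t
  rcases hε with h | h <;> subst h <;> field_simp <;> ring
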